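/- Cantor's bijection f maps the set Q of quadratic irrational numbers of [0,1] bijectively onto Q × Q; that is, the restriction of f to Q is a one-to-one mapping from Q onto Q². -/

import Mathlib

open Filter Finset MeasureTheory

/-- `qden a n` is the denominator `q_n` of the continued fraction with partial
quotients `a_1 = a 0, a_2 = a 1, …` (0-indexed sequence `a`), defined by
`q_0 = 1`, `q_1 = a_1`, `q_n = a_n q_{n-1} + q_{n-2}`. -/
def qden (a : ℕ → ℕ+) : ℕ → ℕ
  | 0 => 1
  | 1 => a 0
  | (n+2) => (a (n+1) : ℕ) * qden a (n+1) + qden a n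

/-- `pnum a n` is the numerator `p_n`, defined by `p_0 = 0`, `p_1 = 1`,
`p_n = a_n p_{n-1} + p_{n-2}`. -/
def pnum (a : ℕ → ℕ+) : ℕ → ℕ
  | 0 => 0
  | 1 => 1
  | (n+2) => (a (n+1) : ℕ) * pnum a (n+1) + pnum a n

/-- The value `[a_1, a_2, …]` of the infinite continued fraction with partial quotients
`a_1 = a 0, a_2 = a 1, …`, i.e. the limit of the convergents `p_n / q_n` (which always
exists). -/
noncomputable def cfVal (a : ℕ → ℕ+) : ℝ :=
  limUnder atTop (fun n => (pnum a n : ℝ) / (qden a n : ℝ))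

/-- The set `I` of irrational numbers of `[0,1]`. -/
def Iirr : Set ℝ := {x | x ∈ Set.Icc (0:ℝ) 1 ∧ Irrational x}

/-- The (unique) sequence of partial quotients of `x`, when `x` has a continued
fraction expansion. -/
noncomputable def coeff (x : ℝ) : ℕ → ℕ+ := by
  classical
  exact if h : ∃ a : ℕ → ℕ+, cfVal a = x then h.choose else fun _ => 1

/-- First component of Cantor's bijection: `f₁([a_1,a_2,…]) = [a_1,a_3,a_5,…]`. -/
noncomputable def cantorF1 (x : ℝ) : ℝ := cfVal (fun j => coeff x (2*j))

/-- Second component of Cantor's bijection: `f₂([a_1,a_2,…]) = [a_2,a_4,a_6,…]`. -/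
noncomputable def cantorF2 (x : ℝ) : ℝ := cfVal (fun j => coeff x (2*j+1))

/-- The set `Q` of quadratic irrational numbers of `[0,1]`. -/
def QuadIrr : Set ℝ :=
  {x | x ∈ Set.Icc (0:ℝ) 1 ∧ Irrational x ∧
    ∃ p : Polynomial ℚ, p.degree = 2 ∧ Polynomial.aeval x p = 0}

namespace CF

def shift (a : ℕ → ℕ+) (n : ℕ) : ℕ → ℕ+ := fun k => a (n + k)

@[simp] lemma shift_zero (a : ℕ → ℕ+) : shift a 0 = a := by funext k; simp [shift]

lemma shift_shift (a : ℕ → ℕ+) (n m : ℕ) : shift (shift a n) m = shift a (n + m) := by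
  funext k; simp [shift, Nat.add_assoc]

theorem twoStep {P : ℕ → Prop} (h0 : P 0) (h1 : P 1)
    (h : ∀ n, P n → P (n+1) → P (n+2)) : ∀ n, P n
  | 0 => h0
  | 1 => h1
  | (n+2) => h n (twoStep h0 h1 h n) (twoStep h0 h1 h (n+1))

variable (a : ℕ → ℕ+)

lemma qden_pos : ∀ n, 0 < qden a n := by
  refine twoStep (by simp [qden]) (by simp [qden]) (fun n h1 h2 => ?_)
  simp only [qden]; positivity

lemma le_qden : ∀ n, n ≤ qden a n := by
  refine twoStep (by simp [qden]) (by simp [qden]; exact (a 0).pos) (fun n h1 h2 => ?_)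
  have := (a (n+1)).pos
  simp only [qden]; nlinarith [qden_pos a n, qden_pos a (n+1)]

lemma one_le_qden : ∀ n, 1 ≤ qden a n := fun n => qden_pos a n

lemma pnum_le_qden : ∀ n, pnum a n ≤ qden a n := by
  refine twoStep (by simp [pnum, qden]) (by simp [pnum, qden]; exact Nat.one_le_iff_ne_zero.mpr (a 0).ne_zero)
    (fun n h1 h2 => ?_)
  simp only [pnum, qden]
  exact Nat.add_le_add (Nat.mul_le_mul_left _ h2) h1

lemma qden_lt_qden2 : ∀ n, qden a n < qden a (n+2) := by
  intro n
  have h1 := qden_pos a (n+1)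
  have := (a (n+1)).pos
  show qden a n < (a (n+1) : ℕ) * qden a (n+1) + qden a n
  nlinarith

lemma qden_le_succ : ∀ n, qden a n ≤ qden a (n+1) := by
  intro n
  match n with
  | 0 => show 1 ≤ (a 0 : ℕ); exact Nat.one_le_iff_ne_zero.mpr (a 0).ne_zero
  | (m+1) =>
    show qden a (m+1) ≤ (a (m+1) : ℕ) * qden a (m+1) + qden a m
    calc qden a (m+1) ≤ (a (m+1) : ℕ) * qden a (m+1) :=
          Nat.le_mul_of_pos_left _ (a (m+1)).pos
      _ ≤ _ := Nat.le_add_right _ _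

lemma detz : ∀ n, (pnum a (n+1) : ℤ) * qden a n - pnum a n * qden a (n+1) = (-1)^n := by
  intro n
  induction n with
  | zero => simp [pnum, qden]
  | succ n ih =>
    show (((a (n+1) : ℕ) * pnum a (n+1) + pnum a n : ℕ) : ℤ) * qden a (n+1)
      - (pnum a (n+1) : ℤ) * (((a (n+1) : ℕ) * qden a (n+1) + qden a n : ℕ)) = (-1)^(n+1)
    push_cast
    push_cast at ih
    ring_nf
    ring_nf at ih
    linarith

noncomputable def conv (n : ℕ) : ℝ := (pnum a n : ℝ) / (qden a n : ℝ)

lemma qden_real_pos (n : ℕ) : (0:ℝ) < (qden a n : ℝ) := by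
  exact_mod_cast qden_pos a n

lemma conv_nonneg (n : ℕ) : 0 ≤ conv a n := by
  unfold conv; positivity

lemma conv_le_one (n : ℕ) : conv a n ≤ 1 := by
  rw [conv, div_le_one (qden_real_pos a n)]
  exact_mod_cast pnum_le_qden a n

lemma conv_sub (n : ℕ) :
    conv a (n+1) - conv a n = (-1)^n / ((qden a n : ℝ) * qden a (n+1)) := by
  have h0 := qden_real_pos a n
  have h1 := qden_real_pos a (n+1)
  have hd : ((pnum a (n+1) : ℝ) * qden a n - pnum a n * qden a (n+1)) = (-1)^n := by
    exact_mod_cast congrArg (Int.cast : ℤ → ℝ) (detz a n)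
  rw [conv, conv, div_sub_div _ _ (ne_of_gt h1) (ne_of_gt h0)]
  rw [mul_comm ((qden a (n+1) : ℝ)) _] at *
  congr 1
  linarith
lemma nest (n : ℕ) :
    Set.Icc (min (conv a (n+1)) (conv a (n+2))) (max (conv a (n+1)) (conv a (n+2))) ⊆
      Set.Icc (min (conv a n) (conv a (n+1))) (max (conv a n) (conv a (n+1))) := by
  have e0 := conv_sub a n
  have e1 := conv_sub a (n+1)
  have p0 : (0:ℝ) < 1/((qden a n : ℝ) * qden a (n+1)) := by
    have := qden_real_pos a n; have := qden_real_pos a (n+1); positivity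
  have p1 : (0:ℝ) < 1/((qden a (n+1) : ℝ) * qden a (n+2)) := by
    have := qden_real_pos a (n+1); have := qden_real_pos a (n+2); positivity
  have hlt : (qden a n : ℝ) * qden a (n+1) < (qden a (n+1) : ℝ) * qden a (n+2) := by
    have c2 : (qden a n : ℝ) < qden a (n+2) := by exact_mod_cast qden_lt_qden2 a n
    have c0 : (1:ℝ) ≤ qden a n := by exact_mod_cast one_le_qden a n
    nlinarith [qden_real_pos a (n+1)]
  have h1 : 1/((qden a (n+1) : ℝ) * qden a (n+2)) < 1/((qden a n : ℝ) * qden a (n+1)) := by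
    apply one_div_lt_one_div_of_lt _ hlt
    have := qden_real_pos a n; have := qden_real_pos a (n+1); positivity
  rcases Nat.even_or_odd n with he | ho
  · have s0 : (-1:ℝ)^n = 1 := he.neg_one_pow
    have s1 : (-1:ℝ)^(n+1) = -1 := by rw [pow_succ, s0]; ring
    rw [s0] at e0
    rw [s1, neg_div] at e1
    have A : conv a n < conv a (n+1) := by linarith
    have B : conv a (n+2) < conv a (n+1) := by linarith
    have C : conv a n < conv a (n+2) := by linarith
    rw [min_eq_left A.le, max_eq_right A.le, min_eq_right B.le, max_eq_left B.le]
    exact Set.Icc_subset_Icc C.le le_rfl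
  · have s0 : (-1:ℝ)^n = -1 := ho.neg_one_pow
    have s1 : (-1:ℝ)^(n+1) = 1 := by rw [pow_succ, s0]; ring
    rw [s0, neg_div] at e0
    rw [s1] at e1
    have A : conv a (n+1) < conv a n := by linarith
    have B : conv a (n+1) < conv a (n+2) := by linarith
    have C : conv a (n+2) < conv a n := by linarith
    rw [min_eq_right A.le, max_eq_left A.le, min_eq_left B.le, max_eq_right B.le]
    exact Set.Icc_subset_Icc le_rfl C.le

lemma nest_many (n k : ℕ) :
    Set.Icc (min (conv a (n+k)) (conv a (n+k+1))) (max (conv a (n+k)) (conv a (n+k+1))) ⊆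
      Set.Icc (min (conv a n) (conv a (n+1))) (max (conv a n) (conv a (n+1))) := by
  induction k with
  | zero => exact subset_rfl
  | succ k ih => exact (nest a (n+k)).trans ih

lemma conv_mem (n m : ℕ) (h : n ≤ m) :
    conv a m ∈ Set.Icc (min (conv a n) (conv a (n+1))) (max (conv a n) (conv a (n+1))) := by
  obtain ⟨k, rfl⟩ := Nat.exists_eq_add_of_le h
  exact nest_many a n k ⟨min_le_left _ _, le_max_left _ _⟩

lemma abs_sub_le_of_mem {u v x y : ℝ} (hx : x ∈ Set.Icc (min u v) (max u v))
    (hy : y ∈ Set.Icc (min u v) (max u v)) : |x - y| ≤ |u - v| := by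
  obtain ⟨hx1, hx2⟩ := hx; obtain ⟨hy1, hy2⟩ := hy
  have h := max_sub_min_eq_abs u v
  have h2 := abs_sub_comm u v
  rw [abs_sub_le_iff]
  constructor <;> linarith

lemma abs_conv_succ_sub (n : ℕ) :
    |conv a n - conv a (n+1)| = 1/((qden a n : ℝ) * qden a (n+1)) := by
  rw [abs_sub_comm, conv_sub, abs_div, abs_pow, abs_neg, abs_one, one_pow]
  congr 1
  exact abs_of_pos (by have := qden_real_pos a n; have := qden_real_pos a (n+1); positivity)

lemma ebound (n : ℕ) : 1/((qden a n : ℝ) * qden a (n+1)) ≤ 1/(n+1 : ℝ) := by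
  apply one_div_le_one_div_of_le (by positivity)
  have h1 : ((n:ℝ)+1) ≤ (qden a (n+1) : ℝ) := by exact_mod_cast le_qden a (n+1)
  have h2 : (1:ℝ) ≤ (qden a n : ℝ) := by exact_mod_cast one_le_qden a n
  nlinarith

lemma conv_cauchy : CauchySeq (conv a) := by
  apply cauchySeq_of_le_tendsto_0 (fun N => 1/((qden a N : ℝ) * qden a (N+1)))
  · intro n m N hn hm
    rw [Real.dist_eq, ← abs_conv_succ_sub a N]
    exact abs_sub_le_of_mem (conv_mem a N n hn) (conv_mem a N m hm)
  · apply squeeze_zero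
    · intro n
      have := qden_real_pos a n; have := qden_real_pos a (n+1); positivity
    · exact ebound a
    · exact tendsto_one_div_add_atTop_nhds_zero_nat

lemma tendsto_conv : Tendsto (conv a) atTop (nhds (cfVal a)) := by
  obtain ⟨L, hL⟩ := cauchySeq_tendsto_of_complete (conv_cauchy a)
  have h : cfVal a = L := hL.limUnder_eq
  rwa [h]

lemma cfVal_mem (n : ℕ) :
    cfVal a ∈ Set.Icc (min (conv a n) (conv a (n+1))) (max (conv a n) (conv a (n+1))) :=
  isClosed_Icc.mem_of_tendsto (tendsto_conv a)
    (eventually_atTop.2 ⟨n, fun m hm => conv_mem a n m hm⟩)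

lemma cfVal_dist (n : ℕ) : |cfVal a - conv a n| ≤ 1/((qden a n : ℝ) * qden a (n+1)) := by
  rw [← abs_conv_succ_sub a n]
  exact abs_sub_le_of_mem (cfVal_mem a n) (conv_mem a n n le_rfl)

lemma conv_two_lt_conv_three : conv a 2 < conv a 3 := by
  have e := conv_sub a 2
  have : ((-1:ℝ))^2 = 1 := by norm_num
  rw [this] at e
  have := qden_real_pos a 2; have := qden_real_pos a 3
  nlinarith [one_div_pos.mpr (mul_pos (qden_real_pos a 2) (qden_real_pos a 3))]

lemma cfVal_mem_c2c3 : cfVal a ∈ Set.Icc (conv a 2) (conv a 3) := by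
  have h := cfVal_mem a 2
  rwa [min_eq_left (conv_two_lt_conv_three a).le, max_eq_right (conv_two_lt_conv_three a).le] at h

lemma conv_two_pos : 0 < conv a 2 := by
  have hp : pnum a 2 = (a 1 : ℕ) := by simp [pnum]
  rw [conv, hp]
  have : (0:ℝ) < ((a 1 : ℕ) : ℝ) := by exact_mod_cast (a 1).pos
  exact div_pos this (qden_real_pos a 2)

lemma conv_three_lt_one : conv a 3 < 1 := by
  have e1 := conv_sub a 1
  have e2 := conv_sub a 2
  have s1 : ((-1:ℝ))^1 = -1 := by norm_num
  have s2 : ((-1:ℝ))^2 = 1 := by norm_num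
  rw [s1, neg_div] at e1; rw [s2] at e2
  have hlt : (qden a 1 : ℝ) * qden a 2 < (qden a 2 : ℝ) * qden a 3 := by
    have c2 : (qden a 1 : ℝ) < qden a 3 := by exact_mod_cast qden_lt_qden2 a 1
    have c0 : (1:ℝ) ≤ qden a 1 := by exact_mod_cast one_le_qden a 1
    nlinarith [qden_real_pos a 2]
  have h1 : 1/((qden a 2 : ℝ) * qden a 3) < 1/((qden a 1 : ℝ) * qden a 2) := by
    apply one_div_lt_one_div_of_lt _ hlt
    have := qden_real_pos a 1; have := qden_real_pos a 2; positivity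
  have hc1 : conv a 1 ≤ 1 := conv_le_one a 1
  linarith

lemma cfVal_pos : 0 < cfVal a := lt_of_lt_of_le (conv_two_pos a) (cfVal_mem_c2c3 a).1

lemma cfVal_lt_one : cfVal a < 1 := lt_of_le_of_lt (cfVal_mem_c2c3 a).2 (conv_three_lt_one a)

lemma cfVal_nonneg : 0 ≤ cfVal a := (cfVal_pos a).le
lemma pnum_shift : ∀ n, pnum a (n+1) = qden (shift a 1) n := by
  refine twoStep (by simp [pnum, qden]) (by simp [pnum, qden, shift]) (fun n h1 h2 => ?_)
  have hc : (shift a 1) (n+1) = a (n+2) := by simp only [shift]; congr 1; omega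
  show (a (n+2) : ℕ) * pnum a (n+2) + pnum a (n+1)
      = ((shift a 1) (n+1) : ℕ) * qden (shift a 1) (n+1) + qden (shift a 1) n
  rw [hc, h1, h2]

lemma qden_shift : ∀ n, qden a (n+1) = (a 0 : ℕ) * qden (shift a 1) n + pnum (shift a 1) n := by
  refine twoStep (by simp [pnum, qden]) (by simp [pnum, qden, shift]; ring) (fun n h1 h2 => ?_)
  have hc : (shift a 1) (n+1) = a (n+2) := by simp only [shift]; congr 1; omega
  show (a (n+2) : ℕ) * qden a (n+2) + qden a (n+1)
      = (a 0 : ℕ) * (((shift a 1) (n+1) : ℕ) * qden (shift a 1) (n+1) + qden (shift a 1) n)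
        + (((shift a 1) (n+1) : ℕ) * pnum (shift a 1) (n+1) + pnum (shift a 1) n)
  rw [hc, h1, h2]; ring

lemma a0_real_pos : (0:ℝ) < ((a 0 : ℕ) : ℝ) := by exact_mod_cast (a 0).pos

lemma conv_succ_shift (n : ℕ) :
    conv a (n+1) = 1/(((a 0 : ℕ) : ℝ) + conv (shift a 1) n) := by
  have hq := qden_real_pos (shift a 1) n
  have hp : (0:ℝ) ≤ (pnum (shift a 1) n : ℝ) := by positivity
  have ha0 := a0_real_pos a
  have h3 : ((a 0 : ℕ) : ℝ) + conv (shift a 1) n ≠ 0 := by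
    have := conv_nonneg (shift a 1) n; positivity
  have h4 : ((a 0 : ℕ):ℝ) + (pnum (shift a 1) n : ℝ)/(qden (shift a 1) n : ℝ) ≠ 0 := by
    positivity
  rw [conv, conv, pnum_shift a n, qden_shift a n, eq_div_iff h4]
  push_cast
  field_simp

lemma cfVal_shift : cfVal a = 1/(((a 0 : ℕ) : ℝ) + cfVal (shift a 1)) := by
  have hb := tendsto_conv (shift a 1)
  have h1 : Tendsto (fun n => conv a (n+1)) atTop (nhds (cfVal a)) :=
    (tendsto_conv a).comp (tendsto_add_atTop_nat 1)
  have hne : ((a 0 : ℕ) : ℝ) + cfVal (shift a 1) ≠ 0 := by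
    have := cfVal_pos (shift a 1); have := a0_real_pos a; positivity
  have h2 : Tendsto (fun n => 1/(((a 0 : ℕ) : ℝ) + conv (shift a 1) n)) atTop
      (nhds (1/(((a 0 : ℕ) : ℝ) + cfVal (shift a 1)))) :=
    tendsto_const_nhds.div (tendsto_const_nhds.add hb) hne
  have heq : (fun n => conv a (n+1)) = fun n => 1/(((a 0 : ℕ) : ℝ) + conv (shift a 1) n) :=
    funext fun n => conv_succ_shift a n
  rw [heq] at h1
  exact tendsto_nhds_unique h1 h2

lemma cfVal_ne_rat : ∀ (v : ℕ), 0 < v → ∀ (u : ℤ) (a : ℕ → ℕ+), cfVal a * (v:ℝ) ≠ (u:ℝ) := by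
  intro v
  induction v using Nat.strong_induction_on with
  | _ v ih =>
  intro hv u a h
  set x := cfVal a with hxdef
  have hx0 : 0 < x := cfVal_pos a
  have hx1 : x < 1 := cfVal_lt_one a
  have hvR : (0:ℝ) < (v:ℝ) := by exact_mod_cast hv
  have hu0 : 0 < u := by
    have : (0:ℝ) < (u:ℝ) := by rw [← h]; positivity
    exact_mod_cast this
  have huv : u < (v:ℤ) := by
    have : (u:ℝ) < (v:ℝ) := by rw [← h]; nlinarith
    exact_mod_cast this
  have hs := cfVal_shift a
  set t := cfVal (shift a 1) with htdef
  have ht0 : 0 < t := cfVal_pos _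
  have hden : (0:ℝ) < ((a 0 : ℕ):ℝ) + t := by have := a0_real_pos a; linarith
  have hinv : x * (((a 0 : ℕ):ℝ) + t) = 1 := by
    rw [hxdef, hs]; field_simp
  have hlt : u.toNat < v := by omega
  have hpos : 0 < u.toNat := by omega
  refine ih u.toNat hlt hpos ((v:ℤ) - (a 0 : ℕ) * u) (shift a 1) ?_
  have hcast : ((u.toNat : ℕ) : ℝ) = (u:ℝ) := by exact_mod_cast Int.toNat_of_nonneg hu0.le
  rw [hcast]
  push_cast
  linear_combination (-t) * h + (-((a 0 : ℕ):ℝ)) * h + (v:ℝ) * hinv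

lemma cfVal_irrational : Irrational (cfVal a) := by
  rintro ⟨q, hq⟩
  refine cfVal_ne_rat q.den q.pos q.num a ?_
  rw [← hq, Rat.cast_def]
  have : ((q.den : ℕ) : ℝ) ≠ 0 := by exact_mod_cast q.den_nz
  field_simp

lemma head_tail (a b : ℕ → ℕ+) (h : cfVal a = cfVal b) :
    a 0 = b 0 ∧ cfVal (shift a 1) = cfVal (shift b 1) := by
  have ha := cfVal_shift a
  have hb := cfVal_shift b
  set s := cfVal (shift a 1) with hsd
  set t := cfVal (shift b 1) with htd
  have hs0 : 0 < s := cfVal_pos _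
  have hs1 : s < 1 := cfVal_lt_one _
  have ht0 : 0 < t := cfVal_pos _
  have ht1 : t < 1 := cfVal_lt_one _
  have hx0 : 0 < cfVal a := cfVal_pos a
  have hda : (0:ℝ) < ((a 0 : ℕ):ℝ) + s := by have := a0_real_pos a; linarith
  have hdb : (0:ℝ) < ((b 0 : ℕ):ℝ) + t := by have := a0_real_pos b; linarith
  have e1 : cfVal a * (((a 0 : ℕ):ℝ) + s) = 1 := by rw [ha]; field_simp
  have e2 : cfVal a * (((b 0 : ℕ):ℝ) + t) = 1 := by rw [h, hb]; field_simp
  have heq : ((a 0 : ℕ):ℝ) + s = ((b 0 : ℕ):ℝ) + t :=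
    mul_left_cancel₀ (ne_of_gt hx0) (e1.trans e2.symm)
  have h1' : ((a 0 : ℕ):ℝ) < ((b 0 : ℕ):ℝ) + 1 := by linarith
  have h2' : ((b 0 : ℕ):ℝ) < ((a 0 : ℕ):ℝ) + 1 := by linarith
  have n1 : (a 0 : ℕ) < (b 0 : ℕ) + 1 := by exact_mod_cast h1'
  have n2 : (b 0 : ℕ) < (a 0 : ℕ) + 1 := by exact_mod_cast h2'
  have h0 : a 0 = b 0 := PNat.coe_injective (by omega)
  refine ⟨h0, ?_⟩
  have : ((a 0 : ℕ):ℝ) = ((b 0 : ℕ):ℝ) := by rw [h0]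
  linarith [heq]

lemma cfVal_inj_coeff : ∀ n (a b : ℕ → ℕ+), cfVal a = cfVal b → a n = b n := by
  intro n
  induction n with
  | zero => exact fun a b h => (head_tail a b h).1
  | succ n ih =>
    intro a b h
    have := ih (shift a 1) (shift b 1) (head_tail a b h).2
    simpa [shift, Nat.add_comm] using this

lemma cfVal_injective : Function.Injective cfVal :=
  fun a b h => funext fun n => cfVal_inj_coeff n a b h
lemma rep (t : ℕ → ℝ) (hpos : ∀ n, 0 < t n)
    (hrec : ∀ n, t n = 1/((a n : ℕ) + t (n+1))) :
    ∀ n, t 0 * ((qden a (n+1) : ℝ) + t (n+1) * qden a n)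
      = (pnum a (n+1) : ℝ) + t (n+1) * pnum a n := by
  intro n
  induction n with
  | zero =>
    have hd : (0:ℝ) < ((a 0 : ℕ):ℝ) + t 1 := by
      have := a0_real_pos a; linarith [hpos 1]
    have h := hrec 0
    show t 0 * (((qden a 1 : ℕ):ℝ) + t 1 * ((qden a 0 : ℕ):ℝ))
        = ((pnum a 1 : ℕ):ℝ) + t 1 * ((pnum a 0 : ℕ):ℝ)
    simp only [qden, pnum]
    rw [h]
    push_cast
    field_simp
    ring
  | succ n ih =>
    have hd : (0:ℝ) < ((a (n+1) : ℕ):ℝ) + t (n+2) := by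
      have : (0:ℝ) < ((a (n+1) : ℕ):ℝ) := by exact_mod_cast (a (n+1)).pos
      linarith [hpos (n+2)]
    rw [hrec (n+1)] at ih
    field_simp at ih
    show t 0 * ((((a (n+1) : ℕ) * qden a (n+1) + qden a n : ℕ):ℝ)
          + t (n+2) * ((qden a (n+1) : ℕ):ℝ))
        = (((a (n+1) : ℕ) * pnum a (n+1) + pnum a n : ℕ):ℝ)
          + t (n+2) * ((pnum a (n+1) : ℕ):ℝ)
    push_cast
    linear_combination ih

lemma cfVal_eq_of_rec (t : ℕ → ℝ) (hpos : ∀ n, 0 < t n)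
    (hrec : ∀ n, t n = 1/((a n : ℕ) + t (n+1))) : cfVal a = t 0 := by
  have hle1 : ∀ n, t n ≤ 1 := by
    intro n
    have ha : (1:ℝ) ≤ ((a n : ℕ):ℝ) := by exact_mod_cast (a n).pos
    have hd : (0:ℝ) < ((a n : ℕ):ℝ) + t (n+1) := by linarith [hpos (n+1)]
    rw [hrec n, div_le_one hd]
    linarith [hpos (n+1)]
  have key : ∀ n, |t 0 - conv a (n+1)| ≤ 1/((n:ℝ)+1) := by
    intro n
    have hr := rep a t hpos hrec n
    have hq' := qden_real_pos a n
    have hq := qden_real_pos a (n+1)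
    have hs0 := hpos (n+1)
    have hs1 := hle1 (n+1)
    have hd : (0:ℝ) < (qden a (n+1) : ℝ) + t (n+1) * qden a n := by positivity
    have h2 : t 0 - conv a (n+1)
        = t (n+1) * ((pnum a n : ℝ) * qden a (n+1) - (pnum a (n+1) : ℝ) * qden a n)
          / (((qden a (n+1) : ℝ) + t (n+1) * qden a n) * qden a (n+1)) := by
      rw [conv, eq_div_iff (by positivity)]
      field_simp
      linear_combination (qden a (n+1):ℝ) * hr
    have hdet : (pnum a n : ℝ) * qden a (n+1) - (pnum a (n+1) : ℝ) * qden a n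
        = -((-1:ℝ)^n) := by
      have := detz a n
      have h3 : ((pnum a (n+1) : ℤ) * qden a n - pnum a n * qden a (n+1) : ℤ) = (-1)^n := this
      have h4 : ((pnum a (n+1) : ℝ) * qden a n - (pnum a n : ℝ) * qden a (n+1)) = (-1:ℝ)^n := by
        exact_mod_cast congrArg (Int.cast : ℤ → ℝ) h3
      linarith
    rw [h2, hdet, abs_div, abs_mul]
    have e1 : |-((-1:ℝ)^n)| = 1 := by
      rw [abs_neg, abs_pow, abs_neg, abs_one, one_pow]
    rw [e1, mul_one, abs_of_pos hs0, abs_of_pos (by positivity)]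
    have hge : ((n:ℝ)+1) ≤ ((qden a (n+1) : ℝ) + t (n+1) * qden a n) * qden a (n+1) := by
      have g1 : ((n:ℝ)+1) ≤ (qden a (n+1) : ℝ) := by exact_mod_cast le_qden a (n+1)
      nlinarith
    exact div_le_div₀ zero_le_one hs1 (by positivity) hge
  have h0 : Tendsto (fun n => conv a (n+1) - t 0) atTop (nhds 0) := by
    apply squeeze_zero_norm _ tendsto_one_div_add_atTop_nhds_zero_nat
    intro n
    rw [Real.norm_eq_abs, abs_sub_comm]
    exact key n
  have h1 : Tendsto (fun n => conv a (n+1)) atTop (nhds (t 0)) := by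
    have := h0.add (tendsto_const_nhds : Tendsto (fun _ : ℕ => t 0) atTop (nhds (t 0)))
    simpa using this
  have h2 : Tendsto (fun n => conv a (n+1)) atTop (nhds (cfVal a)) :=
    (tendsto_conv a).comp (tendsto_add_atTop_nat 1)
  exact tendsto_nhds_unique h2 h1

lemma cfVal_tail_rec (n : ℕ) :
    cfVal (shift a n) = 1/(((a n : ℕ):ℝ) + cfVal (shift a (n+1))) := by
  have h := cfVal_shift (shift a n)
  rw [shift_shift] at h
  have h0 : (shift a n) 0 = a n := by simp [shift]
  rwa [h0] at h

lemma tail_rep (n : ℕ) :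
    cfVal a * ((qden a (n+1):ℝ) + cfVal (shift a (n+1)) * qden a n)
      = (pnum a (n+1):ℝ) + cfVal (shift a (n+1)) * pnum a n := by
  have h := rep a (fun k => cfVal (shift a k)) (fun k => cfVal_pos _)
    (fun k => cfVal_tail_rec a k) n
  simpa using h
lemma coeff_cfVal : coeff (cfVal a) = a := by
  have h : ∃ b : ℕ → ℕ+, cfVal b = cfVal a := ⟨a, rfl⟩
  unfold coeff
  rw [dif_pos h]
  exact cfVal_injective h.choose_spec

lemma exists_cfVal {x : ℝ} (h0 : 0 < x) (h1 : x < 1) (hx : Irrational x) :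
    ∃ b : ℕ → ℕ+, cfVal b = x := by
  classical
  set t : ℕ → ℝ := fun n => (fun y => Int.fract y⁻¹)^[n] x with htdef
  have ht0 : t 0 = x := rfl
  have hstep : ∀ n, t (n+1) = Int.fract (t n)⁻¹ := fun n =>
    Function.iterate_succ_apply' _ n x
  have hinv : ∀ n, Irrational (t n) ∧ 0 < t n ∧ t n < 1 := by
    intro n; induction n with
    | zero => exact ⟨hx, h0, h1⟩
    | succ n ih =>
      obtain ⟨hi, hp, hl⟩ := ih
      have hii : Irrational (t n)⁻¹ := hi.inv
      have hfi : Irrational (Int.fract (t n)⁻¹) := by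
        rw [Int.fract]
        exact hii.sub_intCast _
      refine ⟨by rw [hstep]; exact hfi, ?_, by rw [hstep]; exact Int.fract_lt_one _⟩
      rw [hstep]
      refine (Int.fract_nonneg _).lt_of_ne (Ne.symm ?_)
      intro hz
      exact (by rw [hz] at hfi; simpa using hfi.ne_int 0 : False)
  have hfl : ∀ n, 1 ≤ ⌊(t n)⁻¹⌋ := by
    intro n
    obtain ⟨hi, hp, hl⟩ := hinv n
    have hle : (1:ℝ) ≤ (t n)⁻¹ := by
      rw [le_inv_comm₀ one_pos hp]
      simpa using hl.le
    exact Int.le_floor.mpr (by exact_mod_cast hle)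
  refine ⟨fun n => ⟨(⌊(t n)⁻¹⌋).toNat, by have := hfl n; omega⟩, ?_⟩
  set A : ℕ → ℕ+ := fun n => ⟨(⌊(t n)⁻¹⌋).toNat, by have := hfl n; omega⟩ with hAdef
  have hA : ∀ n, ((A n : ℕ) : ℝ) = ((⌊(t n)⁻¹⌋ : ℤ) : ℝ) := by
    intro n
    have h' : ((A n : ℕ) : ℤ) = ⌊(t n)⁻¹⌋ := by
      simp only [hAdef, PNat.mk_coe]
      exact Int.toNat_of_nonneg (by have := hfl n; omega)
    exact_mod_cast h'
  have hrec : ∀ n, t n = 1/(((A n : ℕ):ℝ) + t (n+1)) := by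
    intro n
    obtain ⟨hi, hp, hl⟩ := hinv n
    rw [hstep n, hA n, Int.fract]
    have he : ((⌊(t n)⁻¹⌋:ℤ):ℝ) + ((t n)⁻¹ - ((⌊(t n)⁻¹⌋:ℤ):ℝ)) = (t n)⁻¹ := by ring
    rw [he, one_div, inv_inv]
  rw [cfVal_eq_of_rec A t (fun n => (hinv n).2.1) hrec, ht0]
def IsQR (x : ℝ) : Prop := ∃ A B C : ℚ, A ≠ 0 ∧ (A:ℝ)*x^2 + (B:ℝ)*x + (C:ℝ) = 0

lemma mem_quadIrr_iff {x : ℝ} :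
    x ∈ QuadIrr ↔ (x ∈ Set.Icc (0:ℝ) 1 ∧ Irrational x ∧ IsQR x) := by
  constructor
  · rintro ⟨h1, h2, p, hdeg, hev⟩
    refine ⟨h1, h2, ?_⟩
    have hnd : p.natDegree = 2 := Polynomial.natDegree_eq_of_degree_eq_some hdeg
    have hne : p ≠ 0 := fun h => by simp [h] at hdeg
    have hc2 : p.coeff 2 ≠ 0 := Polynomial.coeff_ne_zero_of_eq_degree hdeg
    refine ⟨p.coeff 2, p.coeff 1, p.coeff 0, hc2, ?_⟩
    have hsum := Polynomial.aeval_eq_sum_range (p := p) x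
    rw [hnd] at hsum
    rw [hsum] at hev
    simp [Finset.sum_range_succ, Rat.smul_def] at hev
    linarith [hev]
  · rintro ⟨h1, h2, A, B, C, hA, heq⟩
    refine ⟨h1, h2, Polynomial.C A * Polynomial.X^2 + Polynomial.C B * Polynomial.X
      + Polynomial.C C, Polynomial.degree_quadratic hA, ?_⟩
    simp only [map_add, map_mul, map_pow, Polynomial.aeval_C, Polynomial.aeval_X, eq_ratCast]
    linear_combination heq

lemma mobius_den_ne (γ δ : ℚ) (hne : ¬(γ = 0 ∧ δ = 0)) {x : ℝ} (hx : Irrational x) :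
    (γ:ℝ)*x + δ ≠ 0 := by
  intro h
  by_cases hg : γ = 0
  · have hd : δ ≠ 0 := fun hd => hne ⟨hg, hd⟩
    rw [hg] at h
    simp at h
    exact hd (by exact_mod_cast h)
  · apply hx
    refine ⟨-δ/γ, ?_⟩
    have hgR : (γ:ℝ) ≠ 0 := by exact_mod_cast hg
    push_cast
    field_simp
    linarith

lemma mobius_irrational (α β γ δ : ℚ) (hdet : α*δ - β*γ ≠ 0) {x : ℝ} (hx : Irrational x) :
    Irrational (((α:ℝ)*x + β)/((γ:ℝ)*x + δ)) := by
  have hgd : ¬(γ = 0 ∧ δ = 0) := by rintro ⟨h1, h2⟩; rw [h1, h2] at hdet; simp at hdet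
  have hden := mobius_den_ne γ δ hgd hx
  rintro ⟨r, hr⟩
  have hmul : (α:ℝ)*x + β = (r:ℝ)*((γ:ℝ)*x + δ) := by
    have h' := hr
    rw [eq_div_iff hden] at h'
    linarith [h']
  by_cases hc : α - r*γ = 0
  · have hb : β = r*δ := by
      have hcR : ((α:ℝ) - (r:ℝ)*γ) = 0 := by exact_mod_cast hc
      have : (β:ℝ) = (r:ℝ)*δ := by linear_combination hmul - x*hcR
      exact_mod_cast this
    apply hdet
    have ha : α = r*γ := by linarith [hc]
    rw [ha, hb]; ring
  · apply hx
    refine ⟨(r*δ - β)/(α - r*γ), ?_⟩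
    have hcR : ((α:ℝ) - (r:ℝ)*γ) ≠ 0 := by exact_mod_cast hc
    push_cast
    rw [div_eq_iff hcR]
    linear_combination -hmul

lemma mobius_quad (α β γ δ : ℚ) (hdet : α*δ - β*γ ≠ 0) {x : ℝ} (hx : Irrational x)
    (h : IsQR x) : IsQR (((α:ℝ)*x + β)/((γ:ℝ)*x + δ)) := by
  obtain ⟨A, B, C, hA, hroot⟩ := h
  have hgd : ¬(γ = 0 ∧ δ = 0) := by rintro ⟨h1, h2⟩; rw [h1, h2] at hdet; simp at hdet
  have hden := mobius_den_ne γ δ hgd hx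
  have hyirr := mobius_irrational α β γ δ hdet hx
  set y := ((α:ℝ)*x + β)/((γ:ℝ)*x + δ) with hy
  set A' : ℚ := A*δ^2 - B*δ*γ + C*γ^2 with hA'
  set B' : ℚ := -2*A*δ*β + B*(δ*α + β*γ) - 2*C*γ*α with hB'
  set C' : ℚ := A*β^2 - B*β*α + C*α^2 with hC'
  have key : (A':ℝ)*y^2 + (B':ℝ)*y + (C':ℝ) = 0 := by
    have h2 : (A':ℝ)*y^2 + (B':ℝ)*y + (C':ℝ)
        = ((A':ℝ)*((α:ℝ)*x+β)^2 + (B':ℝ)*((α:ℝ)*x+β)*((γ:ℝ)*x+δ)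
            + (C':ℝ)*((γ:ℝ)*x+δ)^2)/(((γ:ℝ)*x+δ)^2) := by
      have hden' : x*(γ:ℝ)+δ ≠ 0 := by rwa [mul_comm]
      rw [hy]; field_simp
    have h3 : (A':ℝ)*((α:ℝ)*x+β)^2 + (B':ℝ)*((α:ℝ)*x+β)*((γ:ℝ)*x+δ)
        + (C':ℝ)*((γ:ℝ)*x+δ)^2 = 0 := by
      have e : (A':ℝ)*((α:ℝ)*x+β)^2 + (B':ℝ)*((α:ℝ)*x+β)*((γ:ℝ)*x+δ)
          + (C':ℝ)*((γ:ℝ)*x+δ)^2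
          = (((α:ℝ)*δ - (β:ℝ)*γ))^2 * ((A:ℝ)*x^2 + (B:ℝ)*x + (C:ℝ)) := by
        rw [hA', hB', hC']; push_cast; ring
      rw [e, hroot, mul_zero]
    rw [h2, h3, zero_div]
  refine ⟨A', B', C', ?_, key⟩
  intro hA'0
  have hB'0 : B' = 0 := by
    by_contra hB'0
    apply hyirr
    refine ⟨-C'/B', ?_⟩
    have hBR : (B':ℝ) ≠ 0 := by exact_mod_cast hB'0
    have hAR : (A':ℝ) = 0 := by exact_mod_cast hA'0
    push_cast
    rw [div_eq_iff hBR]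
    linear_combination -key + y^2*hAR
  have hC'0 : C' = 0 := by
    have hAR : (A':ℝ) = 0 := by exact_mod_cast hA'0
    have hBR : (B':ℝ) = 0 := by exact_mod_cast hB'0
    have : (C':ℝ) = 0 := by linear_combination key - y^2*hAR - y*hBR
    exact_mod_cast this
  have hzero : A*(α*δ - β*γ)^2 = 0 := by
    linear_combination α^2 * hA'0 + α*γ*hB'0 + γ^2*hC'0
  rcases mul_eq_zero.mp hzero with h | h
  · exact hA h
  · exact hdet (by exact pow_eq_zero_iff (n := 2) (by norm_num) |>.mp h)
lemma detR (n : ℕ) :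
    (pnum a (n+1):ℝ) * qden a n - (pnum a n:ℝ) * qden a (n+1) = (-1)^n := by
  exact_mod_cast congrArg (Int.cast : ℤ → ℝ) (detz a n)

lemma detQ (n : ℕ) :
    (pnum a (n+1):ℚ) * qden a n - (pnum a n:ℚ) * qden a (n+1) = (-1)^n := by
  have h := detz a n
  have h2 : (((pnum a (n+1):ℤ) * qden a n - pnum a n * qden a (n+1) : ℤ) : ℚ)
      = (((-1:ℤ)^n : ℤ):ℚ) := by exact_mod_cast congrArg (Int.cast : ℤ → ℚ) h
  push_cast at h2
  linear_combination h2

lemma cfVal_mobius_of_tail (n : ℕ) (h : IsQR (cfVal (shift a (n+1)))) : IsQR (cfVal a) := by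
  set T := cfVal (shift a (n+1)) with hT
  have hTirr : Irrational T := cfVal_irrational _
  have hT0 : 0 < T := cfVal_pos _
  have e1 := tail_rep a n
  have hpos : (0:ℝ) < ((qden a n : ℚ):ℝ)*T + ((qden a (n+1) : ℚ):ℝ) := by
    push_cast
    nlinarith [qden_real_pos a n, qden_real_pos a (n+1)]
  have hx : cfVal a = (((pnum a n : ℚ):ℝ)*T + ((pnum a (n+1):ℚ):ℝ))
      /(((qden a n : ℚ):ℝ)*T + ((qden a (n+1):ℚ):ℝ)) := by
    rw [eq_div_iff (ne_of_gt hpos)]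
    push_cast
    linear_combination e1
  have hdet : (pnum a n : ℚ)*(qden a (n+1):ℚ) - (pnum a (n+1):ℚ)*(qden a n : ℚ) ≠ 0 := by
    have hd : (pnum a n : ℚ)*(qden a (n+1):ℚ) - (pnum a (n+1):ℚ)*(qden a n : ℚ)
        = -(-1)^n := by linear_combination -(detQ a n)
    rw [hd]
    simp
  rw [hx]
  exact mobius_quad (pnum a n : ℚ) (pnum a (n+1) : ℚ) (qden a n : ℚ) (qden a (n+1) : ℚ)
    hdet hTirr h

lemma isqr_int {x : ℝ} (h : IsQR x) :
    ∃ A B C : ℤ, A ≠ 0 ∧ (A:ℝ)*x^2 + (B:ℝ)*x + (C:ℝ) = 0 := by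
  obtain ⟨a, b, c, ha, heq⟩ := h
  refine ⟨a.num * (b.den:ℤ) * (c.den:ℤ), b.num * (a.den:ℤ) * (c.den:ℤ),
    c.num * (a.den:ℤ) * (b.den:ℤ), ?_, ?_⟩
  · have h1 : a.num ≠ 0 := Rat.num_ne_zero.mpr ha
    have h2 : (b.den:ℤ) ≠ 0 := by exact_mod_cast b.den_nz
    have h3 : (c.den:ℤ) ≠ 0 := by exact_mod_cast c.den_nz
    exact mul_ne_zero (mul_ne_zero h1 h2) h3
  · have ea : (a.num:ℝ) = (a:ℝ) * a.den := by rw [Rat.cast_def]; field_simp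
    have eb : (b.num:ℝ) = (b:ℝ) * b.den := by rw [Rat.cast_def]; field_simp
    have ec : (c.num:ℝ) = (c:ℝ) * c.den := by rw [Rat.cast_def]; field_simp
    push_cast
    rw [ea, eb, ec]
    linear_combination ((a.den:ℝ) * b.den * c.den) * heq

end CF

def Gq (A B C : ℤ) (a : ℕ → ℕ+) (n : ℕ) : ℤ :=
  A * (pnum a n:ℤ)^2 + B * (pnum a n:ℤ) * (qden a n:ℤ) + C * (qden a n:ℤ)^2

def Hq (A B C : ℤ) (a : ℕ → ℕ+) (n : ℕ) : ℤ :=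
  2*A*(pnum a (n+1):ℤ)*(pnum a n:ℤ)
    + B*((pnum a (n+1):ℤ)*(qden a n:ℤ) + (pnum a n:ℤ)*(qden a (n+1):ℤ))
    + 2*C*(qden a (n+1):ℤ)*(qden a n:ℤ)

namespace CF

variable (a : ℕ → ℕ+) {A B C : ℤ}

lemma root_eq (hroot : (A:ℝ)*(cfVal a)^2 + (B:ℝ)*(cfVal a) + (C:ℝ) = 0) (n : ℕ) :
    (Gq A B C a n : ℝ) * (cfVal (shift a (n+1)))^2
      + (Hq A B C a n : ℝ) * cfVal (shift a (n+1)) + (Gq A B C a (n+1) : ℝ) = 0 := by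
  have e1 := tail_rep a n
  unfold Gq Hq
  push_cast
  linear_combination (((qden a (n+1):ℝ) + cfVal (shift a (n+1)) * (qden a n:ℝ))^2) * hroot
    - ((A:ℝ)*(((pnum a (n+1):ℝ) + cfVal (shift a (n+1)) * (pnum a n:ℝ))
        + cfVal a * ((qden a (n+1):ℝ) + cfVal (shift a (n+1)) * (qden a n:ℝ)))
      + (B:ℝ)*((qden a (n+1):ℝ) + cfVal (shift a (n+1)) * (qden a n:ℝ))) * e1

lemma G_real (n : ℕ) : (Gq A B C a n : ℝ)
    = (qden a n:ℝ)^2 * ((A:ℝ)*(conv a n)^2 + (B:ℝ)*conv a n + (C:ℝ)) := by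
  have hq := qden_real_pos a n
  unfold Gq conv
  push_cast
  field_simp

lemma G_bound (hroot : (A:ℝ)*(cfVal a)^2 + (B:ℝ)*(cfVal a) + (C:ℝ) = 0) (n : ℕ) :
    |Gq A B C a n| ≤ 2*|A| + |B| := by
  have hq := qden_real_pos a n
  have hq' := qden_real_pos a (n+1)
  have hqle : (qden a n : ℝ) ≤ (qden a (n+1) : ℝ) := by exact_mod_cast qden_le_succ a n
  have hx0 := cfVal_pos a
  have hx1 := cfVal_lt_one a
  have hc0 := conv_nonneg a n
  have hc1 := conv_le_one a n
  have key : (Gq A B C a n : ℝ)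
      = (qden a n:ℝ)^2 * ((conv a n - cfVal a) * ((A:ℝ)*(conv a n + cfVal a) + B)) := by
    rw [G_real]
    linear_combination ((qden a n:ℝ)^2) * hroot
  have b1 : |conv a n - cfVal a| ≤ 1/((qden a n:ℝ) * qden a (n+1)) := by
    rw [abs_sub_comm]
    exact cfVal_dist a n
  have hcx : |conv a n + cfVal a| ≤ 2 := by
    rw [abs_le]; constructor <;> linarith
  have b2 : |(A:ℝ)*(conv a n + cfVal a) + B| ≤ 2*|(A:ℝ)| + |(B:ℝ)| := by
    calc |(A:ℝ)*(conv a n + cfVal a) + B| ≤ |(A:ℝ)*(conv a n + cfVal a)| + |(B:ℝ)| :=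
          abs_add_le _ _
      _ = |(A:ℝ)| * |conv a n + cfVal a| + |(B:ℝ)| := by rw [abs_mul]
      _ ≤ |(A:ℝ)| * 2 + |(B:ℝ)| := by
          have := abs_nonneg (A:ℝ)
          nlinarith
      _ = 2 * |(A:ℝ)| + |(B:ℝ)| := by ring
  have hfrac : (qden a n:ℝ)^2 * (1/((qden a n:ℝ) * qden a (n+1))) ≤ 1 := by
    rw [mul_one_div, div_le_one (by positivity)]
    nlinarith
  have hR : |(Gq A B C a n : ℝ)| ≤ 2*|(A:ℝ)| + |(B:ℝ)| := by
    rw [key, abs_mul, abs_mul, abs_of_nonneg (sq_nonneg ((qden a n:ℝ)))]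
    calc (qden a n:ℝ)^2 * (|conv a n - cfVal a| * |(A:ℝ)*(conv a n + cfVal a) + B|)
        ≤ (qden a n:ℝ)^2 * ((1/((qden a n:ℝ) * qden a (n+1))) * (2*|(A:ℝ)| + |(B:ℝ)|)) := by
          apply mul_le_mul_of_nonneg_left _ (sq_nonneg _)
          apply mul_le_mul b1 b2 (abs_nonneg _) (by positivity)
      _ = ((qden a n:ℝ)^2 * (1/((qden a n:ℝ) * qden a (n+1)))) * (2*|(A:ℝ)| + |(B:ℝ)|) := by
          ring
      _ ≤ 1 * (2*|(A:ℝ)| + |(B:ℝ)|) := by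
          apply mul_le_mul_of_nonneg_right hfrac (by positivity)
      _ = 2*|(A:ℝ)| + |(B:ℝ)| := one_mul _
  have : |((Gq A B C a n : ℤ):ℝ)| ≤ 2*|(A:ℝ)| + |(B:ℝ)| := hR
  rw [← Int.cast_abs, ← Int.cast_abs, ← Int.cast_abs] at this
  exact_mod_cast this

lemma H_sq (n : ℕ) : (Hq A B C a n)^2
    = (B^2 - 4*A*C) * ((pnum a (n+1):ℤ)*(qden a n:ℤ) - (pnum a n:ℤ)*(qden a (n+1):ℤ))^2
      + 4 * Gq A B C a n * Gq A B C a (n+1) := by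
  unfold Gq Hq; ring

lemma int_abs_le_sq (z : ℤ) : |z| ≤ z^2 := by
  rcases eq_or_lt_of_le (abs_nonneg z) with h | h
  · rw [← h]; nlinarith [sq_abs z]
  · have h1 : 1 ≤ |z| := h
    nlinarith [sq_abs z]

lemma H_bound (hroot : (A:ℝ)*(cfVal a)^2 + (B:ℝ)*(cfVal a) + (C:ℝ) = 0) (n : ℕ) :
    |Hq A B C a n| ≤ |B^2 - 4*A*C| + 4*(2*|A| + |B|)^2 := by
  have hdsq : ((pnum a (n+1):ℤ)*(qden a n:ℤ) - (pnum a n:ℤ)*(qden a (n+1):ℤ))^2 = 1 := by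
    rw [detz a n, ← pow_mul, mul_comm n 2, pow_mul]
    norm_num
  have h1 : (Hq A B C a n)^2 = (B^2 - 4*A*C) + 4 * Gq A B C a n * Gq A B C a (n+1) := by
    rw [H_sq, hdsq, mul_one]
  have g1 := G_bound a hroot n
  have g2 := G_bound a hroot (n+1)
  have habs := int_abs_le_sq (Hq A B C a n)
  have hGn := abs_nonneg (Gq A B C a n)
  have hGm := abs_nonneg (Gq A B C a (n+1))
  have hmm : |Gq A B C a n| * |Gq A B C a (n+1)| ≤ (2*|A| + |B|) * (2*|A| + |B|) :=
    mul_le_mul g1 g2 hGm (by positivity)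
  have hmul : Gq A B C a n * Gq A B C a (n+1) ≤ (2*|A| + |B|)^2 := by
    calc Gq A B C a n * Gq A B C a (n+1) ≤ |Gq A B C a n * Gq A B C a (n+1)| := le_abs_self _
      _ = |Gq A B C a n| * |Gq A B C a (n+1)| := abs_mul _ _
      _ ≤ (2*|A| + |B|)^2 := by nlinarith [hmm]
  have := le_abs_self (B^2 - 4*A*C)
  linarith

lemma conv_ne_succ (n : ℕ) : conv a n ≠ conv a (n+1) := by
  have e := conv_sub a n
  have hp : (0:ℝ) < (qden a n:ℝ) * qden a (n+1) :=
    mul_pos (qden_real_pos a n) (qden_real_pos a (n+1))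
  intro h
  rw [h, sub_self] at e
  exact (div_ne_zero (pow_ne_zero n (by norm_num : (-1:ℝ) ≠ 0)) (ne_of_gt hp)) e.symm

lemma conv_ne_two (n : ℕ) : conv a n ≠ conv a (n+2) := by
  have e0 := conv_sub a n
  have e1 := conv_sub a (n+1)
  have hlt : (qden a n : ℝ) * qden a (n+1) < (qden a (n+1) : ℝ) * qden a (n+2) := by
    have c2 : (qden a n : ℝ) < qden a (n+2) := by exact_mod_cast qden_lt_qden2 a n
    have c0 : (1:ℝ) ≤ qden a n := by exact_mod_cast one_le_qden a n
    nlinarith [qden_real_pos a (n+1)]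
  have h1 : 1/((qden a (n+1) : ℝ) * qden a (n+2)) < 1/((qden a n : ℝ) * qden a (n+1)) := by
    apply one_div_lt_one_div_of_lt _ hlt
    have := qden_real_pos a n; have := qden_real_pos a (n+1); positivity
  intro h
  rcases Nat.even_or_odd n with he | ho
  · have s0 : (-1:ℝ)^n = 1 := he.neg_one_pow
    have s1 : (-1:ℝ)^(n+1) = -1 := by rw [pow_succ, s0]; ring
    rw [s0] at e0; rw [s1, neg_div] at e1
    have : conv a (n+2) - conv a n = 0 := by rw [← h]; ring
    linarith
  · have s0 : (-1:ℝ)^n = -1 := ho.neg_one_pow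
    have s1 : (-1:ℝ)^(n+1) = 1 := by rw [pow_succ, s0]; ring
    rw [s0, neg_div] at e0; rw [s1] at e1
    have : conv a (n+2) - conv a n = 0 := by rw [← h]; ring
    linarith

lemma conv_root_of_G_zero (n : ℕ) (h : Gq A B C a n = 0) :
    (A:ℝ)*(conv a n)^2 + (B:ℝ)*conv a n + (C:ℝ) = 0 := by
  have hg : (Gq A B C a n : ℝ) = 0 := by rw [h]; simp
  rw [G_real] at hg
  have hq := qden_real_pos a n
  rcases mul_eq_zero.mp hg with h' | h'
  · exact absurd h' (by positivity)
  · exact h'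

lemma G_zero_step (hroot : (A:ℝ)*(cfVal a)^2 + (B:ℝ)*(cfVal a) + (C:ℝ) = 0) (n : ℕ)
    (h : Gq A B C a n = 0) : Hq A B C a n = 0 ∧ Gq A B C a (n+1) = 0 := by
  have hre := root_eq a hroot n
  have hg : (Gq A B C a n : ℝ) = 0 := by rw [h]; simp
  rw [hg, zero_mul, zero_add] at hre
  have hH : Hq A B C a n = 0 := by
    by_contra hH
    have hHR : ((Hq A B C a n : ℤ):ℚ) ≠ 0 := by exact_mod_cast hH
    apply cfVal_irrational (shift a (n+1))
    refine ⟨((-(Gq A B C a (n+1)) : ℤ):ℚ)/((Hq A B C a n : ℤ):ℚ), ?_⟩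
    push_cast
    rw [div_eq_iff (by exact_mod_cast hH)]
    linear_combination -hre
  refine ⟨hH, ?_⟩
  have hHR : (Hq A B C a n : ℝ) = 0 := by rw [hH]; simp
  rw [hHR, zero_mul, zero_add] at hre
  exact_mod_cast hre

lemma G_ne_zero (hA : A ≠ 0)
    (hroot : (A:ℝ)*(cfVal a)^2 + (B:ℝ)*(cfVal a) + (C:ℝ) = 0) (n : ℕ) :
    Gq A B C a n ≠ 0 := by
  intro h0
  have h1 := G_zero_step a hroot n h0
  have h2 := G_zero_step a hroot (n+1) h1.2
  have E1 := conv_root_of_G_zero a n h0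
  have E2 := conv_root_of_G_zero a (n+1) h1.2
  have E3 := conv_root_of_G_zero a (n+2) h2.2
  have d1 : conv a n ≠ conv a (n+1) := conv_ne_succ a n
  have d2 : conv a (n+1) ≠ conv a (n+2) := conv_ne_succ a (n+1)
  have d3 : conv a n ≠ conv a (n+2) := conv_ne_two a n
  have f12 : (A:ℝ)*(conv a n + conv a (n+1)) + B = 0 := by
    have hm : (conv a n - conv a (n+1)) * ((A:ℝ)*(conv a n + conv a (n+1)) + B) = 0 := by
      linear_combination E1 - E2
    rcases mul_eq_zero.mp hm with h | h
    · exact absurd (sub_eq_zero.mp h) d1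
    · exact h
  have f13 : (A:ℝ)*(conv a n + conv a (n+2)) + B = 0 := by
    have hm : (conv a n - conv a (n+2)) * ((A:ℝ)*(conv a n + conv a (n+2)) + B) = 0 := by
      linear_combination E1 - E3
    rcases mul_eq_zero.mp hm with h | h
    · exact absurd (sub_eq_zero.mp h) d3
    · exact h
  have hfin : (A:ℝ)*(conv a (n+1) - conv a (n+2)) = 0 := by
    linear_combination f12 - f13
  rcases mul_eq_zero.mp hfin with h | h
  · exact hA (by exact_mod_cast h)
  · exact d2 (sub_eq_zero.mp h)
lemma periodic_of_tail_eq {i j : ℕ} (hij : i < j)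
    (h : cfVal (shift a (i+1)) = cfVal (shift a (j+1))) :
    ∃ N P, 0 < P ∧ ∀ m, N ≤ m → a (m + P) = a m := by
  have hsh : shift a (i+1) = shift a (j+1) := cfVal_injective h
  refine ⟨i+1, j - i, by omega, ?_⟩
  intro m hm
  have e1 : a (m + (j - i)) = (shift a (j+1)) (m - (i+1)) := by
    show a (m + (j - i)) = a ((j+1) + (m - (i+1)))
    exact congrArg a (by omega)
  rw [e1, ← hsh]
  show a ((i+1) + (m - (i+1))) = a m
  exact congrArg a (by omega)

theorem lagrange (h : IsQR (cfVal a)) :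
    ∃ N P, 0 < P ∧ ∀ m, N ≤ m → a (m + P) = a m := by
  obtain ⟨A, B, C, hA, hroot⟩ := isqr_int h
  set K : ℤ := 2*|A| + |B| with hK
  set M : ℤ := |B^2 - 4*A*C| + 4*(2*|A| + |B|)^2 with hM
  set f : ℕ → ℤ × ℤ × ℤ := fun n => (Gq A B C a n, Hq A B C a n, Gq A B C a (n+1)) with hf
  set S : Set (ℤ × ℤ × ℤ) := Set.Icc (-K, -M, -K) (K, M, K) with hS
  have hmaps : ∀ n, f n ∈ S := by
    intro n
    have g1 := abs_le.mp (G_bound a hroot n)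
    have g2 := abs_le.mp (G_bound a hroot (n+1))
    have h1 := abs_le.mp (H_bound a hroot n)
    simp only [hS, Set.mem_Icc, Prod.le_def]
    exact ⟨⟨g1.1, h1.1, g2.1⟩, ⟨g1.2, h1.2, g2.2⟩⟩
  have hex : ∃ v ∈ S, {n | f n = v}.Infinite := by
    by_contra hfin
    push_neg at hfin
    have hsub : (Set.univ : Set ℕ) ⊆ ⋃ v ∈ S, {n | f n = v} :=
      fun n _ => Set.mem_biUnion (hmaps n) rfl
    have : (Set.univ : Set ℕ).Finite :=
      Set.Finite.subset ((Set.finite_Icc _ _).biUnion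
        (fun v hv => (hfin v hv))) hsub
    exact Set.infinite_univ this
  obtain ⟨v, hvS, hinf⟩ := hex
  obtain ⟨n1, hn1⟩ := hinf.nonempty
  obtain ⟨n2, hn2, h12⟩ := hinf.exists_gt n1
  obtain ⟨n3, hn3, h23⟩ := hinf.exists_gt n2
  simp only [Set.mem_setOf_eq, hf] at hn1 hn2 hn3
  have e12 := hn1.trans hn2.symm
  have e13 := hn1.trans hn3.symm
  simp only [Prod.mk.injEq] at e12 e13
  by_cases hT12 : cfVal (shift a (n1+1)) = cfVal (shift a (n2+1))
  · exact periodic_of_tail_eq a h12 hT12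
  by_cases hT13 : cfVal (shift a (n1+1)) = cfVal (shift a (n3+1))
  · exact periodic_of_tail_eq a (h12.trans h23) hT13
  have R1 := root_eq a hroot n1
  have R2 := root_eq a hroot n2
  have R3 := root_eq a hroot n3
  rw [← e12.1, ← e12.2.1, ← e12.2.2] at R2
  rw [← e13.1, ← e13.2.1, ← e13.2.2] at R3
  have hgne : (Gq A B C a n1 : ℝ) ≠ 0 := by
    exact_mod_cast G_ne_zero a hA hroot n1
  have f12 : (Gq A B C a n1 : ℝ) * (cfVal (shift a (n1+1)) + cfVal (shift a (n2+1)))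
      + (Hq A B C a n1 : ℝ) = 0 := by
    have hm : (cfVal (shift a (n1+1)) - cfVal (shift a (n2+1)))
        * ((Gq A B C a n1 : ℝ) * (cfVal (shift a (n1+1)) + cfVal (shift a (n2+1)))
          + (Hq A B C a n1 : ℝ)) = 0 := by
      linear_combination R1 - R2
    rcases mul_eq_zero.mp hm with h' | h'
    · exact absurd (sub_eq_zero.mp h') hT12
    · exact h'
  have f13 : (Gq A B C a n1 : ℝ) * (cfVal (shift a (n1+1)) + cfVal (shift a (n3+1)))
      + (Hq A B C a n1 : ℝ) = 0 := by
    have hm : (cfVal (shift a (n1+1)) - cfVal (shift a (n3+1)))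
        * ((Gq A B C a n1 : ℝ) * (cfVal (shift a (n1+1)) + cfVal (shift a (n3+1)))
          + (Hq A B C a n1 : ℝ)) = 0 := by
      linear_combination R1 - R3
    rcases mul_eq_zero.mp hm with h' | h'
    · exact absurd (sub_eq_zero.mp h') hT13
    · exact h'
  have hfin : (Gq A B C a n1 : ℝ)
      * (cfVal (shift a (n2+1)) - cfVal (shift a (n3+1))) = 0 := by
    linear_combination f12 - f13
  have hT23 : cfVal (shift a (n2+1)) = cfVal (shift a (n3+1)) := by
    rcases mul_eq_zero.mp hfin with h' | h'
    · exact absurd h' hgne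
    · exact sub_eq_zero.mp h'
  exact periodic_of_tail_eq a h23 hT23

lemma evp_iterate {N P : ℕ} (h : ∀ m, N ≤ m → a (m + P) = a m) :
    ∀ k m, N ≤ m → a (m + k * P) = a m := by
  intro k
  induction k with
  | zero => intro m _; simp
  | succ k ih =>
    intro m hm
    have e1 : a (m + (k+1) * P) = a ((m + k * P) + P) := congrArg a (by ring)
    rw [e1, h (m + k * P) (by omega), ih m hm]

theorem quad_of_evperiodic (N P : ℕ) (hP : 0 < P) (h : ∀ m, N ≤ m → a (m + P) = a m) :
    IsQR (cfVal a) := by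
  set b := shift a N with hbdef
  have hb : ∀ m, b (m + P) = b m := by
    intro m
    show a (N + (m + P)) = a (N + m)
    have e1 : a (N + (m + P)) = a ((N + m) + P) := congrArg a (by ring)
    rw [e1, h (N + m) (by omega)]
  have hsb : shift b P = b := by
    funext k
    show b (P + k) = b k
    have : b (P + k) = b (k + P) := congrArg b (by ring)
    rw [this, hb]
  obtain ⟨m, hm⟩ : ∃ m, P = m + 1 := ⟨P - 1, by omega⟩
  have ht := tail_rep b m
  have hsh : shift b (m+1) = b := by rw [← hm, hsb]
  rw [hsh] at ht
  have hqb : IsQR (cfVal b) := by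
    refine ⟨(qden b m : ℚ), (qden b (m+1) : ℚ) - (pnum b m : ℚ), -(pnum b (m+1) : ℚ),
      ?_, ?_⟩
    · have := qden_pos b m
      positivity
    · push_cast
      linear_combination ht
  rcases Nat.eq_zero_or_pos N with hN | hN
  · rw [hN] at hbdef
    rw [hbdef] at hqb
    rwa [shift_zero] at hqb
  · obtain ⟨n, hn⟩ : ∃ n, N = n + 1 := ⟨N - 1, by omega⟩
    apply cfVal_mobius_of_tail a n
    rw [← hn]
    exact hqb

end CF
namespace CF

variable (a : ℕ → ℕ+)

lemma cfVal_mem_quadIrr_of_evp (N P : ℕ) (hP : 0 < P)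
    (h : ∀ m, N ≤ m → a (m + P) = a m) : cfVal a ∈ QuadIrr := by
  rw [mem_quadIrr_iff]
  exact ⟨⟨(cfVal_pos a).le, (cfVal_lt_one a).le⟩, cfVal_irrational a,
    quad_of_evperiodic a N P hP h⟩

lemma quadIrr_unpack {x : ℝ} (hx : x ∈ QuadIrr) :
    ∃ b N P, cfVal b = x ∧ 0 < P ∧ (∀ m, N ≤ m → b (m + P) = b m) := by
  rw [mem_quadIrr_iff] at hx
  obtain ⟨⟨h0, h1⟩, hirr, hq⟩ := hx
  have hx0 : 0 < x := lt_of_le_of_ne h0 (fun h => hirr ⟨0, by rw [← h]; norm_num⟩)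
  have hx1 : x < 1 := lt_of_le_of_ne h1 (fun h => hirr ⟨1, by rw [h]; norm_num⟩)
  obtain ⟨b, hb⟩ := exists_cfVal hx0 hx1 hirr
  obtain ⟨N, P, hP, hper⟩ := lagrange b (by rw [hb]; exact hq)
  exact ⟨b, N, P, hb, hP, hper⟩

lemma cantorF1_cfVal : cantorF1 (cfVal a) = cfVal (fun j => a (2*j)) := by
  unfold cantorF1
  rw [coeff_cfVal]

lemma cantorF2_cfVal : cantorF2 (cfVal a) = cfVal (fun j => a (2*j+1)) := by
  unfold cantorF2
  rw [coeff_cfVal]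

end CF

open CF in
theorem cantor_bijection_bijOn_quadratic' :
    Set.BijOn (fun x => (cantorF1 x, cantorF2 x)) QuadIrr (QuadIrr ×ˢ QuadIrr) := by
  refine ⟨?_, ?_, ?_⟩
  · -- MapsTo
    intro x hx
    obtain ⟨b, N, P, hb, hP, hper⟩ := quadIrr_unpack hx
    rw [← hb]
    dsimp only
    refine ⟨?_, ?_⟩
    · rw [cantorF1_cfVal]
      apply cfVal_mem_quadIrr_of_evp _ N P hP
      intro j hj
      calc b (2*(j + P)) = b (2*j + 2*P) := congrArg b (by ring)
        _ = b (2*j) := evp_iterate b hper 2 (2*j) (by omega)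
    · rw [cantorF2_cfVal]
      apply cfVal_mem_quadIrr_of_evp _ N P hP
      intro j hj
      calc b (2*(j + P)+1) = b ((2*j+1) + 2*P) := congrArg b (by ring)
        _ = b (2*j+1) := evp_iterate b hper 2 (2*j+1) (by omega)
  · -- InjOn
    intro x hx y hy heq
    obtain ⟨b, N, P, hb, -, -⟩ := quadIrr_unpack hx
    obtain ⟨c, M, Q, hc, -, -⟩ := quadIrr_unpack hy
    rw [← hb, ← hc] at heq
    dsimp only at heq
    rw [cantorF1_cfVal, cantorF2_cfVal, cantorF1_cfVal, cantorF2_cfVal] at heq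
    simp only [Prod.mk.injEq] at heq
    have heven := cfVal_injective heq.1
    have hodd := cfVal_injective heq.2
    have hbc : b = c := by
      funext n
      rcases Nat.even_or_odd n with ⟨k, hk⟩ | ⟨k, hk⟩
      · calc b n = b (2*k) := congrArg b (by omega)
          _ = c (2*k) := congrFun heven k
          _ = c n := congrArg c (by omega)
      · calc b n = b (2*k+1) := congrArg b (by omega)
          _ = c (2*k+1) := congrFun hodd k
          _ = c n := congrArg c (by omega)
    rw [← hb, ← hc, hbc]
  · -- SurjOn
    rintro ⟨y, z⟩ ⟨hy, hz⟩
    obtain ⟨b, N, P, hb, hP, hperb⟩ := quadIrr_unpack hy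
    obtain ⟨c, M, Q, hc, hQ, hperc⟩ := quadIrr_unpack hz
    classical
    set d : ℕ → ℕ+ := fun n => if n % 2 = 0 then b (n/2) else c (n/2) with hd
    have hd1 : ∀ j, d (2*j) = b j := by
      intro j
      simp only [hd]
      rw [if_pos (by omega)]
      congr 1
      omega
    have hd2 : ∀ j, d (2*j+1) = c j := by
      intro j
      simp only [hd]
      rw [if_neg (by omega)]
      congr 1
      omega
    have hPer : ∀ m, 2*N + 2*M + 1 ≤ m → d (m + 2*(P*Q)) = d m := by
      intro m hm
      rcases Nat.even_or_odd m with ⟨j, hj⟩ | ⟨j, hj⟩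
      · calc d (m + 2*(P*Q)) = d (2*(j + P*Q)) := congrArg d (by rw [hj]; ring)
          _ = b (j + P*Q) := hd1 _
          _ = b (j + Q*P) := congrArg b (by ring)
          _ = b j := evp_iterate b hperb Q j (by omega)
          _ = d (2*j) := (hd1 j).symm
          _ = d m := congrArg d (by omega)
      · calc d (m + 2*(P*Q)) = d (2*(j + P*Q)+1) := congrArg d (by rw [hj]; ring)
          _ = c (j + P*Q) := hd2 _
          _ = c j := evp_iterate c hperc P j (by omega)
          _ = d (2*j+1) := (hd2 j).symm
          _ = d m := congrArg d (by omega)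
    refine ⟨cfVal d, ?_, ?_⟩
    · exact cfVal_mem_quadIrr_of_evp d (2*N + 2*M + 1) (2*(P*Q)) (by positivity) hPer
    · show (cantorF1 (cfVal d), cantorF2 (cfVal d)) = (y, z)
      rw [cantorF1_cfVal, cantorF2_cfVal]
      have e1 : (fun j => d (2*j)) = b := funext hd1
      have e2 : (fun j => d (2*j+1)) = c := funext hd2
      rw [e1, e2, hb, hc]

/-- Cantor's bijection `f = (f₁,f₂)` maps the set `Q` of quadratic irrationals of `[0,1]`
bijectively onto `Q × Q`. -/
theorem cantor_bijection_bijOn_quadratic :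
    Set.BijOn (fun x => (cantorF1 x, cantorF2 x)) QuadIrr (QuadIrr ×ˢ QuadIrr) := by
  exact cantor_bijection_bijOn_quadratic'
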